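/- For a reflexive binary relation T on a set S and the neighborhood approximations A^{l*} = {x : ∃y, (x,y) ∈ T and [y]_T ⊆ A} and A^{u*} = {x : ∀y, (x,y) ∈ T → [y]_T ∩ A ≠ ∅}, one has A^l ⊆ A^{l*} ⊆ A ⊆ A^{u*} ⊆ A^u for every A ⊆ S, where A^l = ⋃{[x]_T : [x]_T ⊆ A} and A^u = ⋃{[x]_T : [x]_T ∩ A ≠ ∅, x ∈ A}. -/
import Mathlib


open Set

/-- The tolerance neighbourhood `[x]_T`. -/
def tcls {α : Type*} (T : α → α → Prop) (x : α) : Set α := {y | T x y}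

/-- Lower approximation `A^l = ⋃{[x]_T : [x]_T ⊆ A}`. -/
def tlow {α : Type*} (T : α → α → Prop) (A : Set α) : Set α :=
  ⋃₀ {B | ∃ x, B = tcls T x ∧ tcls T x ⊆ A}

/-- Upper approximation `A^u = ⋃{[x]_T : [x]_T ∩ A ≠ ∅, x ∈ A}`. -/
def tupp {α : Type*} (T : α → α → Prop) (A : Set α) : Set α :=
  ⋃₀ {B | ∃ x ∈ A, B = tcls T x ∧ (tcls T x ∩ A).Nonempty}

/-- `A^{l*} = {x : ∃ y, (x,y) ∈ T ∧ [y]_T ⊆ A}`. -/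
def tlowStar {α : Type*} (T : α → α → Prop) (A : Set α) : Set α :=
  {x | ∃ y, T x y ∧ tcls T y ⊆ A}

/-- `A^{u*} = {x : ∀ y, (x,y) ∈ T → [y]_T ∩ A ≠ ∅}`. -/
def tuppStar {α : Type*} (T : α → α → Prop) (A : Set α) : Set α :=
  {x | ∀ y, T x y → (tcls T y ∩ A).Nonempty}

theorem stmt7 {α : Type*} (T : α → α → Prop)
    (hrefl : Reflexive T) (hsymm : Symmetric T) (A : Set α) :
    tlow T A ⊆ tlowStar T A ∧ tlowStar T A ⊆ A ∧
      A ⊆ tuppStar T A ∧ tuppStar T A ⊆ tupp T A := by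
  refine ⟨?_, ?_, ?_, ?_⟩
  · rintro x ⟨B, ⟨z, rfl, hz⟩, hx⟩
    exact ⟨z, hsymm hx, hz⟩
  · rintro x ⟨y, hxy, hy⟩
    exact hy (hsymm hxy)
  · intro x hx y hxy
    exact ⟨x, hsymm hxy, hx⟩
  · intro x hx
    obtain ⟨a, hxa, haA⟩ := hx x (hrefl x)
    exact ⟨tcls T a, ⟨a, haA, rfl, ⟨a, hrefl a, haA⟩⟩, hsymm hxa⟩
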